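/- In the setting of the previous identity, define P := I_d − (a−A) M Φ⁻¹ Mᵀ. Then P is an (oblique) projection: P² = P; moreover P V = V, Mᵀ P = 0, and P (a−A) M = 0. -/

import Mathlib

open Matrix

lemma phi_isUnit {d k : ℕ} (a A : Matrix (Fin d) (Fin d) ℝ)
    (M : Matrix (Fin d) (Fin k) ℝ) (ha : a.PosDef) (hA : Aᵀ = -A)
    (hM : Function.Injective M.mulVec) : IsUnit (Mᵀ * (a - A) * M) := by
  rw [← Matrix.mulVec_injective_iff_isUnit]
  intro x y hxy
  suffices h : ∀ z, (Mᵀ * (a - A) * M).mulVec z = 0 → z = 0 by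
    have := h (x - y) (by
      rw [Matrix.mulVec_sub, hxy, sub_self])
    exact sub_eq_zero.mp this
  intro z hz
  by_contra hz0
  have hMz : M.mulVec z ≠ 0 := fun h => hz0 (hM (h.trans (M.mulVec_zero).symm))
  have hpos : 0 < (M.mulVec z) ⬝ᵥ a.mulVec (M.mulVec z) := by
    have := ha.dotProduct_mulVec_pos hMz
    simpa using this
  have hskew : (M.mulVec z) ⬝ᵥ A.mulVec (M.mulVec z) = 0 := by
    have h1 : (M.mulVec z) ⬝ᵥ A.mulVec (M.mulVec z)
        = - ((M.mulVec z) ⬝ᵥ A.mulVec (M.mulVec z)) := by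
      conv_lhs => rw [Matrix.dotProduct_mulVec, ← Matrix.mulVec_transpose, hA,
        Matrix.neg_mulVec, neg_dotProduct, dotProduct_comm]
    linarith
  have hquad : z ⬝ᵥ (Mᵀ * (a - A) * M).mulVec z
      = (M.mulVec z) ⬝ᵥ (a - A).mulVec (M.mulVec z) := by
    rw [← Matrix.mulVec_mulVec, ← Matrix.mulVec_mulVec, Matrix.dotProduct_mulVec,
      Matrix.vecMul_transpose]
  rw [hz, dotProduct_zero] at hquad
  rw [Matrix.sub_mulVec, dotProduct_sub, hskew, sub_zero] at hquad
  linarith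

/-- `P := I - (a-A) M Φ⁻¹ Mᵀ` is an oblique projection: `P² = P`, `P V = V`, `Mᵀ P = 0`
and `P (a-A) M = 0`. -/
theorem stmt6 {d k : ℕ} (hk : k ≤ d) (a A : Matrix (Fin d) (Fin d) ℝ)
    (M : Matrix (Fin d) (Fin k) ℝ) (V : Matrix (Fin d) (Fin (d - k)) ℝ)
    (ha : a.PosDef) (hA : Aᵀ = -A)
    (hM : Function.Injective M.mulVec) (hV : Function.Injective V.mulVec)
    (hVM : Vᵀ * M = 0)
    (P : Matrix (Fin d) (Fin d) ℝ)
    (hP : P = 1 - (a - A) * M * (Mᵀ * (a - A) * M)⁻¹ * Mᵀ) :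
    P * P = P ∧ P * V = V ∧ Mᵀ * P = 0 ∧ P * (a - A) * M = 0 := by
  have hΦ : IsUnit (Mᵀ * (a - A) * M) := phi_isUnit a A M ha hA hM
  have hΦinv : (Mᵀ * (a - A) * M)⁻¹ * (Mᵀ * (a - A) * M) = 1 :=
    Matrix.nonsing_inv_mul _ ((Matrix.isUnit_iff_isUnit_det _).mp hΦ)
  have hMV : Mᵀ * V = 0 := by
    have := congrArg Matrix.transpose hVM
    simpa using this
  have hMP : Mᵀ * P = 0 := by
    rw [hP, Matrix.mul_sub, Matrix.mul_one]
    have : Mᵀ * ((a - A) * M * (Mᵀ * (a - A) * M)⁻¹ * Mᵀ)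
        = (Mᵀ * (a - A) * M) * (Mᵀ * (a - A) * M)⁻¹ * Mᵀ := by simp only [Matrix.mul_assoc]
    rw [this, Matrix.mul_nonsing_inv _ ((Matrix.isUnit_iff_isUnit_det _).mp hΦ),
      Matrix.one_mul, sub_self]
  have hPAM : P * (a - A) * M = 0 := by
    rw [hP, Matrix.sub_mul, Matrix.sub_mul, Matrix.one_mul]
    have : (a - A) * M * (Mᵀ * (a - A) * M)⁻¹ * Mᵀ * (a - A) * M
        = (a - A) * M * ((Mᵀ * (a - A) * M)⁻¹ * (Mᵀ * (a - A) * M)) := by simp only [Matrix.mul_assoc]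
    rw [this, hΦinv, Matrix.mul_one, sub_self]
  refine ⟨?_, ?_, hMP, hPAM⟩
  · nth_rewrite 1 [hP]
    rw [Matrix.sub_mul, Matrix.one_mul]
    have : (a - A) * M * (Mᵀ * (a - A) * M)⁻¹ * Mᵀ * P
        = (a - A) * M * (Mᵀ * (a - A) * M)⁻¹ * (Mᵀ * P) := by simp only [Matrix.mul_assoc]
    rw [this, hMP, Matrix.mul_zero, sub_zero]
  · rw [hP, Matrix.sub_mul, Matrix.one_mul]
    have : (a - A) * M * (Mᵀ * (a - A) * M)⁻¹ * Mᵀ * V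
        = (a - A) * M * (Mᵀ * (a - A) * M)⁻¹ * (Mᵀ * V) := by simp only [Matrix.mul_assoc]
    rw [this, hMV, Matrix.mul_zero, sub_zero]
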